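/- If an elementary cellular automaton F_N is surjective, then the set of its periodic points {x ∈ X : ∃ p > 0, F_N^p(x) = x} is dense in X. -/

import Mathlib

/-- Cantor metric on configurations `ℤ → Bool`. -/
noncomputable def dC (x y : ℤ → Bool) : ℝ :=
  ∑' i : ℤ, if x i = y i then 0 else (1 / 2 : ℝ) ^ i.natAbs

/-- Local rule of the ECA with rule number `N`:
`(a,b,c)` is mapped to the coefficient of `2^(4a+2b+c)` in the binary expansion of `N`. -/
def localRule (N : ℕ) (a b c : Bool) : Bool :=
  N.testBit (4 * a.toNat + 2 * b.toNat + c.toNat)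

/-- The elementary cellular automaton with rule number `N`. -/
def eca (N : ℕ) (x : ℤ → Bool) : ℤ → Bool :=
  fun i => localRule N (x (i - 1)) (x i) (x (i + 1))

/-- `x` belongs to the cylinder `[u]_0`. -/
def inCyl (u : List Bool) (x : ℤ → Bool) : Prop :=
  ∀ j : Fin u.length, x ((j : ℕ) : ℤ) = u.get j

/-- `u` is an `m`-blocking word for `F`. -/
def Blocking (F : (ℤ → Bool) → ℤ → Bool) (m : ℕ) (u : List Bool) : Prop :=
  m ≤ u.length ∧ ∃ q : ℕ, q + m ≤ u.length ∧
    ∀ x y : ℤ → Bool, inCyl u x → inCyl u y → ∀ n : ℕ, ∀ j : ℤ,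
      (q : ℤ) ≤ j → j < (q : ℤ) + (m : ℤ) → F^[n] x j = F^[n] y j

/-- `x` is an equicontinuity point of `F`. -/
def EquicontinuityPoint (F : (ℤ → Bool) → ℤ → Bool) (x : ℤ → Bool) : Prop :=
  ∀ ε : ℝ, 0 < ε → ∃ δ : ℝ, 0 < δ ∧ ∀ y : ℤ → Bool, dC x y < δ →
    ∀ n : ℕ, dC (F^[n] x) (F^[n] y) < ε

/-- `F` is almost equicontinuous: it has at least one equicontinuity point. -/
def AlmostEquicontinuousCA (F : (ℤ → Bool) → ℤ → Bool) : Prop :=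
  ∃ x : ℤ → Bool, EquicontinuityPoint F x

/-- `F` is equicontinuous: every point is an equicontinuity point. -/
def EquicontinuousCA (F : (ℤ → Bool) → ℤ → Bool) : Prop :=
  ∀ x : ℤ → Bool, EquicontinuityPoint F x

/-- `F` is sensitive to initial conditions. -/
def SensitiveCA (F : (ℤ → Bool) → ℤ → Bool) : Prop :=
  ∃ ε : ℝ, 0 < ε ∧ ∀ x : ℤ → Bool, ∀ δ : ℝ, 0 < δ →
    ∃ y : ℤ → Bool, dC x y < δ ∧ ∃ n : ℕ, ε ≤ dC (F^[n] x) (F^[n] y)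

/-- `F` is positively expansive. -/
def PosExpansiveCA (F : (ℤ → Bool) → ℤ → Bool) : Prop :=
  ∃ ε : ℝ, 0 < ε ∧ ∀ x y : ℤ → Bool, x ≠ y →
    ∃ n : ℕ, ε ≤ dC (F^[n] x) (F^[n] y)

/-- The power `σ^q` of the shift map, for `q : ℤ` : `(σ^q x)_i = x_{i+q}`. -/
def shiftBy (q : ℤ) (x : ℤ → Bool) : ℤ → Bool := fun i => x (i + q)

/-- `F` is left-permutive. -/
def LeftPermutive (N : ℕ) : Prop :=
  ∀ b c : Bool, Function.Bijective (fun a => localRule N a b c)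

/-- `F` is right-permutive. -/
def RightPermutive (N : ℕ) : Prop :=
  ∀ a b : Bool, Function.Bijective (fun c => localRule N a b c)

/-- `U` is open in the Cantor metric topology. -/
def IsOpenC (U : Set (ℤ → Bool)) : Prop :=
  ∀ x ∈ U, ∃ δ : ℝ, 0 < δ ∧ ∀ y : ℤ → Bool, dC x y < δ → y ∈ U

/-- `F` is topologically transitive. -/
def TransitiveCA (F : (ℤ → Bool) → ℤ → Bool) : Prop :=
  ∀ U V : Set (ℤ → Bool), IsOpenC U → IsOpenC V → U.Nonempty → V.Nonempty →
    ∃ n : ℕ, 0 < n ∧ ((F^[n]) '' U ∩ V).Nonempty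


/- ### Auxiliary machinery for the proof -/


def caF (φ : Bool → Bool → Bool → Bool) (x : ℤ → Bool) : ℤ → Bool :=
  fun i => φ (x (i - 1)) (x i) (x (i + 1))

lemma caF_shift (φ : Bool → Bool → Bool → Bool) (q : ℤ) (x : ℤ → Bool) :
    caF φ (shiftBy q x) = shiftBy q (caF φ x) := by
  funext i
  simp only [caF, shiftBy]
  rw [show i - 1 + q = i + q - 1 by ring, show i + 1 + q = i + q + 1 by ring]

lemma caF_iter_shift (φ : Bool → Bool → Bool → Bool) (n : ℕ) (q : ℤ) (x : ℤ → Bool) :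
    (caF φ)^[n] (shiftBy q x) = shiftBy q ((caF φ)^[n] x) := by
  induction n generalizing x with
  | zero => rfl
  | succ n ih =>
      rw [Function.iterate_succ_apply, caF_shift, ih, Function.iterate_succ_apply]

lemma caF_local (φ : Bool → Bool → Bool → Bool) :
    ∀ (n : ℕ) (x y : ℤ → Bool) (i : ℤ),
      (∀ j : ℤ, i - n ≤ j → j ≤ i + n → x j = y j) →
      (caF φ)^[n] x i = (caF φ)^[n] y i
  | 0, x, y, i, h => by simpa using h i (by simp) (by simp)
  | (n+1), x, y, i, h => by
      rw [Function.iterate_succ_apply, Function.iterate_succ_apply]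
      refine caF_local φ n (caF φ x) (caF φ y) i ?_
      intro j h1 h2
      have hc : ((n:ℤ)+1) = ((n+1 : ℕ) : ℤ) := by push_cast; ring
      have e1 : x (j-1) = y (j-1) := h _ (by omega) (by omega)
      have e2 : x j = y j := h _ (by omega) (by omega)
      have e3 : x (j+1) = y (j+1) := h _ (by omega) (by omega)
      simp only [caF]
      rw [e1, e2, e3]

lemma leftperm_inj {φ : Bool → Bool → Bool → Bool}
    (hφ : ∀ b c : Bool, φ false b c ≠ φ true b c)
    {a a' b c : Bool} (h : φ a b c = φ a' b c) : a = a' := by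
  cases a <;> cases a' <;>
    first
      | rfl
      | exact absurd h (hφ _ _)
      | exact absurd h.symm (hφ _ _)

lemma caF_unique (φ : Bool → Bool → Bool → Bool)
    (hφ : ∀ b c : Bool, φ false b c ≠ φ true b c) :
    ∀ (p : ℕ) (x y : ℤ → Bool) (i : ℤ),
      (∀ j : ℤ, i - p < j → j ≤ i + p → x j = y j) →
      (caF φ)^[p] x i = (caF φ)^[p] y i → x (i - p) = y (i - p)
  | 0, x, y, i, _, heq => by simpa using heq
  | (p+1), x, y, i, h, heq => by
      rw [Function.iterate_succ_apply, Function.iterate_succ_apply] at heq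
      have hmid := caF_unique φ hφ p (caF φ x) (caF φ y) i ?_ heq
      · simp only [caF] at hmid
        have e2 : x (i - p) = y (i - p) := h _ (by omega) (by omega)
        have e3 : x (i - p + 1) = y (i - p + 1) := h _ (by omega) (by omega)
        rw [e2, e3] at hmid
        have := leftperm_inj hφ hmid
        rw [show i - ((p:ℕ)+1 : ℕ) = i - p - 1 by push_cast; ring]
        exact this
      · intro j h1 h2
        have e1 : x (j-1) = y (j-1) := h _ (by omega) (by omega)
        have e2 : x j = y j := h _ (by omega) (by omega)
        have e3 : x (j+1) = y (j+1) := h _ (by omega) (by omega)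
        simp only [caF]
        rw [e1, e2, e3]

def embedW {n : ℕ} (W : Fin n → Bool) : ℤ → Bool :=
  fun t => if h : 0 ≤ t ∧ t < (n:ℤ) then W ⟨t.toNat, by omega⟩ else false

def newbit (φ : Bool → Bool → Bool → Bool) (p : ℕ) (W : Fin (2*p+1) → Bool) : Bool :=
  (caF φ)^[p] (embedW W) p

def stepS (φ : Bool → Bool → Bool → Bool) (p : ℕ) (W : Fin (2*p+1) → Bool) :
    Fin (2*p+1) → Bool :=
  fun j => if h : (j:ℕ)+1 < 2*p+1 then W ⟨(j:ℕ)+1, h⟩ else newbit φ p W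

lemma stepS_inj (φ : Bool → Bool → Bool → Bool)
    (hφ : ∀ b c : Bool, φ false b c ≠ φ true b c) (p : ℕ) :
    Function.Injective (stepS φ p) := by
  intro V V' hSV
  have hge : ∀ (k : ℕ) (hk : k + 1 < 2*p+1), V ⟨k+1, hk⟩ = V' ⟨k+1, hk⟩ := by
    intro k hk
    have hc := congrFun hSV ⟨k, by omega⟩
    simp only [stepS] at hc
    rwa [dif_pos hk, dif_pos hk] at hc
  have hnew : newbit φ p V = newbit φ p V' := by
    have hc := congrFun hSV ⟨2*p, by omega⟩
    simp only [stepS] at hc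
    rwa [dif_neg (show ¬(2*p+1 < 2*p+1) by omega),
         dif_neg (show ¬(2*p+1 < 2*p+1) by omega)] at hc
  have hagree : ∀ j : ℤ, (p:ℤ) - p < j → j ≤ (p:ℤ) + p → embedW V j = embedW V' j := by
    intro j h1 h2
    have hj0 : 0 ≤ j ∧ j < ((2*p+1 : ℕ) : ℤ) := by push_cast; omega
    simp only [embedW, dif_pos hj0]
    have := hge (j.toNat - 1) (by omega)
    simpa [show j.toNat - 1 + 1 = j.toNat by omega] using this
  have h0 := caF_unique φ hφ p (embedW V) (embedW V') p hagree hnew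
  rw [sub_self] at h0
  have h00 : V ⟨0, by omega⟩ = V' ⟨0, by omega⟩ := by
    have e : ∀ (W : Fin (2*p+1) → Bool), embedW W (0:ℤ) = W ⟨0, by omega⟩ := by
      intro W
      rw [embedW, dif_pos (show (0:ℤ) ≤ 0 ∧ (0:ℤ) < ((2*p+1:ℕ):ℤ) by omega)]
      rfl
    rw [e V, e V'] at h0
    exact h0
  funext j
  rcases j with ⟨j, hj⟩
  rcases Nat.eq_zero_or_pos j with rfl | hj1
  · exact h00
  · have := hge (j - 1) (by omega)
    simpa [show j - 1 + 1 = j by omega] using this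

lemma build_z (φ : Bool → Bool → Bool → Bool) (p Pi : ℕ) (hPi : 0 < Pi)
    (V₀ : Fin (2*p+1) → Bool) (hcyc : (stepS φ p)^[Pi] V₀ = V₀) :
    ∃ z : ℤ → Bool, (∀ (j : ℕ) (hj : j < 2*p+1), z (j:ℤ) = V₀ ⟨j, hj⟩) ∧
      (caF φ)^[p * Pi] z = z := by
  set A : ℕ → (Fin (2*p+1) → Bool) := fun k => (stepS φ p)^[k] V₀ with hAdef
  have hA1 : ∀ k, A (k+1) = stepS φ p (A k) := by
    intro k
    simp only [hAdef, Function.iterate_succ_apply']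
  have hAadd : ∀ k c, A (k + c * Pi) = A k := by
    intro k c
    induction c with
    | zero => simp
    | succ c ih =>
        have : k + (c+1) * Pi = (k + c * Pi) + Pi := by ring
        rw [this]
        show (stepS φ p)^[(k + c * Pi) + Pi] V₀ = A k
        rw [Function.iterate_add_apply, hcyc]
        exact ih
  have hAmod : ∀ k, A k = A (k % Pi) := by
    intro k
    conv_lhs => rw [show k = k % Pi + (k / Pi) * Pi by rw [Nat.mod_add_div']]
    rw [hAadd]
  -- integer mod facts
  have hPiZ : (0:ℤ) < (Pi:ℤ) := by exact_mod_cast hPi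
  have htn : ∀ t : ℤ, 0 ≤ t % (Pi:ℤ) ∧ t % (Pi:ℤ) < (Pi:ℤ) :=
    fun t => ⟨Int.emod_nonneg t (by omega), Int.emod_lt_of_pos t hPiZ⟩
  have hmodcast : ∀ (t : ℤ) (j : ℕ),
      ((t + (j:ℤ)) % (Pi:ℤ)).toNat % Pi = ((t % (Pi:ℤ)).toNat + j) % Pi := by
    intro t j
    have e1 : (t + (j:ℤ)) % (Pi:ℤ) = ((t % Pi) + (j:ℤ)) % (Pi:ℤ) := by
      conv_lhs => rw [show t = t % Pi + Pi * (t / Pi) by rw [Int.emod_add_mul_ediv]]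
      rw [show t % Pi + Pi * (t / Pi) + j = (t % Pi + j) + Pi * (t / Pi) by ring]
      rw [Int.add_mul_emod_self_left]
    have e2 : (t % (Pi:ℤ)) = (((t % (Pi:ℤ)).toNat : ℕ) : ℤ) := by
      rw [Int.toNat_of_nonneg (htn t).1]
    rw [e1]
    conv_lhs => rw [e2]
    rw [show ((((t % (Pi:ℤ)).toNat : ℕ) : ℤ) + (j:ℤ)) = (((t % (Pi:ℤ)).toNat + j : ℕ) : ℤ) by push_cast; ring]
    rw [show ((Pi:ℕ):ℤ) = ((Pi:ℕ):ℤ) from rfl]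
    rw [← Int.natCast_mod]
    rw [Int.toNat_natCast]
    exact Nat.mod_mod_of_dvd _ dvd_rfl
  have hAcong : ∀ (m m' : ℕ), m % Pi = m' % Pi → A m = A m' := by
    intro m m' hmm
    rw [hAmod m, hAmod m', hmm]
  set z : ℤ → Bool := fun t => A ((t % (Pi:ℤ)).toNat) ⟨0, by omega⟩ with hzdef
  have hslide : ∀ (j k : ℕ) (hj : j < 2*p+1), A k ⟨j, hj⟩ = A (k + j) ⟨0, by omega⟩ := by
    intro j
    induction j with
    | zero => intro k hj; simp
    | succ j ih =>
        intro k hj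
        have h1 : A k ⟨j+1, hj⟩ = A (k+1) ⟨j, by omega⟩ := by
          rw [hA1 k]
          simp only [stepS]
          rw [dif_pos (show j + 1 < 2*p+1 from hj)]
        rw [h1, ih (k+1) (by omega), show k+1+j = k+(j+1) by ring]
  have hzwin : ∀ (t : ℤ) (j : ℕ) (hj : j < 2*p+1),
      z (t + (j:ℤ)) = A ((t % (Pi:ℤ)).toNat) ⟨j, hj⟩ := by
    intro t j hj
    show A (((t + (j:ℤ)) % (Pi:ℤ)).toNat) ⟨0, by omega⟩ = _
    rw [hslide j ((t % (Pi:ℤ)).toNat) hj]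
    exact congrFun (hAcong _ _ (hmodcast t j)) _
  have hz0 : ∀ (j : ℕ) (hj : j < 2*p+1), z (j:ℤ) = V₀ ⟨j, hj⟩ := by
    intro j hj
    have := hzwin 0 j hj
    rw [zero_add] at this
    rw [this]
    simp [hAdef]
  have hzper : ∀ (c : ℕ) (t : ℤ), z (t + (c:ℤ) * (Pi:ℤ)) = z t := by
    intro c t
    show A (((t + c * Pi) % (Pi:ℤ)).toNat) ⟨0, by omega⟩ = A ((t % (Pi:ℤ)).toNat) ⟨0, by omega⟩
    rw [Int.add_mul_emod_self_right]
  have hwave : ∀ t : ℤ, (caF φ)^[p] z (t + (p:ℤ)) = z (t + ((2*p+1 : ℕ) : ℤ)) := by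
    intro t
    set r : ℕ := (t % (Pi:ℤ)).toNat with hrdef
    set W : Fin (2*p+1) → Bool := A r with hWdef
    have e1 : (caF φ)^[p] z (t + (p:ℤ)) = (caF φ)^[p] (shiftBy t z) (p:ℤ) := by
      rw [caF_iter_shift]
      simp only [shiftBy]
      rw [add_comm]
    have e2 : (caF φ)^[p] (shiftBy t z) (p:ℤ) = (caF φ)^[p] (embedW W) (p:ℤ) := by
      refine caF_local φ p _ _ _ ?_
      intro j h1 h2
      have hj0 : 0 ≤ j := by omega
      have hjn : j.toNat < 2*p+1 := by omega
      have hsz : shiftBy t z j = A r ⟨j.toNat, hjn⟩ := by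
        simp only [shiftBy]
        rw [show j + t = t + ((j.toNat : ℕ) : ℤ) by omega]
        exact hzwin t j.toNat hjn
      rw [hsz]
      simp only [embedW]
      rw [dif_pos (show 0 ≤ j ∧ j < ((2*p+1:ℕ):ℤ) by omega)]
    have e3 : z (t + ((2*p+1 : ℕ) : ℤ)) = newbit φ p W := by
      have h4 : z (t + ((2*p+1 : ℕ) : ℤ)) = z ((t+1) + ((2*p : ℕ) : ℤ)) := by
        congr 1
        push_cast
        ring
      rw [h4, hzwin (t+1) (2*p) (by omega)]
      have h5 : A (((t+1) % (Pi:ℤ)).toNat) = A (r + 1) := by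
        refine hAcong _ _ ?_
        have := hmodcast t 1
        simpa using this
      rw [h5, hA1 r]
      simp only [stepS]
      rw [dif_neg (show ¬ (2*p+1 < 2*p+1) by omega)]
    rw [e1, e2, e3]
    rfl
  have hFp : (caF φ)^[p] z = shiftBy ((p:ℤ)+1) z := by
    funext t
    have := hwave (t - (p:ℤ))
    rw [show t - (p:ℤ) + (p:ℤ) = t by ring] at this
    rw [this]
    simp only [shiftBy]
    congr 1
    push_cast
    ring
  have hiter : ∀ k : ℕ, (caF φ)^[p * k] z = shiftBy (((p:ℤ)+1) * (k:ℤ)) z := by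
    intro k
    induction k with
    | zero =>
        simp only [Nat.mul_zero, Function.iterate_zero, id_eq, Nat.cast_zero, mul_zero]
        funext t
        simp [shiftBy]
    | succ k ih =>
        have : p * (k+1) = p * k + p := by ring
        rw [this]
        rw [Function.iterate_add_apply, hFp, caF_iter_shift, ih]
        funext t
        simp only [shiftBy]
        congr 1
        push_cast
        ring
  refine ⟨z, hz0, ?_⟩
  rw [hiter Pi]
  funext t
  simp only [shiftBy]
  rw [show ((p:ℤ)+1) * (Pi:ℤ) = (((p+1 : ℕ)):ℤ) * (Pi:ℤ) by push_cast; ring]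
  exact hzper (p+1) t

lemma halfpow_summable : Summable (fun i : ℤ => (1/2 : ℝ) ^ i.natAbs) := by
  have hg : Summable (fun n : ℕ => (1/2 : ℝ) ^ n) :=
    summable_geometric_of_lt_one (by norm_num) (by norm_num)
  refine Summable.of_nat_of_neg ?_ ?_
  · simpa using hg
  · simpa [Int.natAbs_neg] using hg

lemma dC_summand_nonneg (x y : ℤ → Bool) (i : ℤ) :
    (0:ℝ) ≤ (if x i = y i then 0 else (1/2 : ℝ) ^ i.natAbs) := by
  split
  · exact le_refl 0
  · positivity

lemma dC_summable (x y : ℤ → Bool) :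
    Summable (fun i : ℤ => if x i = y i then (0:ℝ) else (1/2 : ℝ) ^ i.natAbs) := by
  refine Summable.of_nonneg_of_le (dC_summand_nonneg x y) ?_ halfpow_summable
  intro i
  split
  · positivity
  · exact le_refl _

lemma dC_self (x : ℤ → Bool) : dC x x = 0 := by
  simp [dC]

lemma dC_le_of_agree (x y : ℤ → Bool) (K : ℕ)
    (h : ∀ i : ℤ, i.natAbs ≤ K → x i = y i) :
    dC x y ≤ (1/2 : ℝ)^K * (2 * ∑' i : ℤ, (1/2 : ℝ) ^ i.natAbs) := by
  have hM := halfpow_summable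
  have hs1 : Summable (fun i : ℤ => (1/2 : ℝ) ^ (i - (K:ℤ)).natAbs) := by
    have := (Equiv.subRight (K:ℤ)).summable_iff (f := fun i : ℤ => (1/2 : ℝ) ^ i.natAbs)
    exact this.mpr hM
  have hs2 : Summable (fun i : ℤ => (1/2 : ℝ) ^ (i + (K:ℤ)).natAbs) := by
    have := (Equiv.addRight (K:ℤ)).summable_iff (f := fun i : ℤ => (1/2 : ℝ) ^ i.natAbs)
    exact this.mpr hM
  have hmaj : ∀ i : ℤ, (if x i = y i then (0:ℝ) else (1/2 : ℝ) ^ i.natAbs) ≤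
      (1/2 : ℝ)^K * ((1/2 : ℝ) ^ (i - (K:ℤ)).natAbs + (1/2 : ℝ) ^ (i + (K:ℤ)).natAbs) := by
    intro i
    by_cases hxy : x i = y i
    · rw [if_pos hxy]; positivity
    · rw [if_neg hxy]
      have hKi : K < i.natAbs := by
        by_contra hcon
        push_neg at hcon
        exact hxy (h i hcon)
      rcases le_or_gt 0 i with hi | hi
      · have e1 : i.natAbs = K + (i - (K:ℤ)).natAbs := by omega
        rw [e1, pow_add]
        have h2 : (0:ℝ) ≤ (1/2 : ℝ) ^ (i + (K:ℤ)).natAbs := by positivity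
        nlinarith [pow_pos (show (0:ℝ) < 1/2 by norm_num) K,
          pow_pos (show (0:ℝ) < 1/2 by norm_num) ((i - (K:ℤ)).natAbs)]
      · have e1 : i.natAbs = K + (i + (K:ℤ)).natAbs := by omega
        rw [e1, pow_add]
        have h2 : (0:ℝ) ≤ (1/2 : ℝ) ^ (i - (K:ℤ)).natAbs := by positivity
        nlinarith [pow_pos (show (0:ℝ) < 1/2 by norm_num) K,
          pow_pos (show (0:ℝ) < 1/2 by norm_num) ((i + (K:ℤ)).natAbs)]
  have hsum : Summable (fun i : ℤ =>
      (1/2 : ℝ)^K * ((1/2 : ℝ) ^ (i - (K:ℤ)).natAbs + (1/2 : ℝ) ^ (i + (K:ℤ)).natAbs)) :=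
    (hs1.add hs2).mul_left _
  have hle := Summable.tsum_le_tsum hmaj (dC_summable x y) hsum
  have e2 : ∑' i : ℤ, (1/2 : ℝ)^K * ((1/2 : ℝ) ^ (i - (K:ℤ)).natAbs + (1/2 : ℝ) ^ (i + (K:ℤ)).natAbs)
      = (1/2 : ℝ)^K * (2 * ∑' i : ℤ, (1/2 : ℝ) ^ i.natAbs) := by
    rw [tsum_mul_left, Summable.tsum_add hs1 hs2]
    have e3 : ∑' i : ℤ, (1/2 : ℝ) ^ (i - (K:ℤ)).natAbs = ∑' i : ℤ, (1/2 : ℝ) ^ i.natAbs := by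
      have := (Equiv.subRight (K:ℤ)).tsum_eq (fun i : ℤ => (1/2 : ℝ) ^ i.natAbs)
      simpa using this
    have e4 : ∑' i : ℤ, (1/2 : ℝ) ^ (i + (K:ℤ)).natAbs = ∑' i : ℤ, (1/2 : ℝ) ^ i.natAbs := by
      have := (Equiv.addRight (K:ℤ)).tsum_eq (fun i : ℤ => (1/2 : ℝ) ^ i.natAbs)
      simpa using this
    rw [e3, e4]
    ring
  calc dC x y ≤ _ := hle
  _ = _ := e2

lemma perm_dpp (φ : Bool → Bool → Bool → Bool)
    (hφ : ∀ b c : Bool, φ false b c ≠ φ true b c)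
    (x : ℤ → Bool) (δ : ℝ) (hδ : 0 < δ) :
    ∃ y : ℤ → Bool, (∃ p : ℕ, 0 < p ∧ (caF φ)^[p] y = y) ∧ dC x y < δ := by
  set C := ∑' i : ℤ, (1/2 : ℝ) ^ i.natAbs with hC
  have hC0 : 0 ≤ C := tsum_nonneg (fun i => by positivity)
  obtain ⟨K, hK⟩ : ∃ K : ℕ, (1/2 : ℝ)^K < δ / (2*C+1) :=
    exists_pow_lt_of_lt_one (by positivity) (by norm_num)
  have hKδ : (1/2 : ℝ)^K * (2*C+1) < δ := (lt_div_iff₀ (by positivity)).mp hK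
  set p := K + 1 with hp
  set V₀ : Fin (2*p+1) → Bool := fun j => x ((j:ℤ) - (p:ℤ)) with hV
  have hinj : Function.Injective (stepS φ p) := stepS_inj φ hφ p
  obtain ⟨Pi, hPi, hcyc⟩ : ∃ Pi, 0 < Pi ∧ (stepS φ p)^[Pi] V₀ = V₀ := by
    obtain ⟨a, b, hab, he⟩ := Finite.exists_ne_map_eq_of_infinite
      (fun k : ℕ => (stepS φ p)^[k] V₀)
    have key : ∀ a b : ℕ, a < b → (stepS φ p)^[a] V₀ = (stepS φ p)^[b] V₀ →
        ∃ Pi, 0 < Pi ∧ (stepS φ p)^[Pi] V₀ = V₀ := by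
      intro a b hlt heq
      refine ⟨b - a, by omega, ?_⟩
      have h2 : (stepS φ p)^[a] ((stepS φ p)^[b-a] V₀) = (stepS φ p)^[a] V₀ := by
        rw [← Function.iterate_add_apply, show a + (b - a) = b by omega]
        exact heq.symm
      exact Function.Injective.iterate hinj a h2
    rcases Nat.lt_or_ge a b with hlt | hge
    · exact key a b hlt he
    · exact key b a (by omega) he.symm
  obtain ⟨z, hz0, hzper⟩ := build_z φ p Pi hPi V₀ hcyc
  refine ⟨shiftBy (p:ℤ) z, ⟨p * Pi, by positivity, ?_⟩, ?_⟩
  · rw [caF_iter_shift, hzper]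
  · have hagree : ∀ i : ℤ, i.natAbs ≤ K → x i = shiftBy (p:ℤ) z i := by
      intro i hi
      have h1 : (i + (p:ℤ)).toNat < 2*p+1 := by omega
      have h2 := hz0 (i + (p:ℤ)).toNat h1
      simp only [shiftBy]
      rw [show (i + (p:ℤ)) = (((i + (p:ℤ)).toNat : ℕ) : ℤ) by omega]
      rw [h2, hV]
      have : ((((i + (p:ℤ)).toNat : ℕ) : ℤ)) - (p:ℤ) = i := by omega
      simp only [this]
    have hle := dC_le_of_agree x (shiftBy (p:ℤ) z) K hagree
    have hpow : (0:ℝ) < (1/2 : ℝ)^K := by positivity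
    calc dC x (shiftBy (p:ℤ) z) ≤ (1/2 : ℝ)^K * (2*C) := hle
    _ < (1/2 : ℝ)^K * (2*C+1) := by nlinarith
    _ < δ := hKδ

lemma leftperm_dpp (N : ℕ)
    (hφ : ∀ b c : Bool, localRule N false b c ≠ localRule N true b c) :
    ∀ x : ℤ → Bool, ∀ δ : ℝ, 0 < δ →
      ∃ y : ℤ → Bool, (∃ p : ℕ, 0 < p ∧ (eca N)^[p] y = y) ∧ dC x y < δ :=
  fun x δ hδ => perm_dpp (localRule N) hφ x δ hδ

def mirr (x : ℤ → Bool) : ℤ → Bool := fun i => x (-i)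

lemma mirr_mirr (x : ℤ → Bool) : mirr (mirr x) = x := by
  funext i; simp [mirr]

lemma dC_mirr (a b : ℤ → Bool) : dC (mirr a) (mirr b) = dC a b := by
  unfold dC
  have := (Equiv.neg ℤ).tsum_eq (fun i : ℤ => if a i = b i then (0:ℝ) else (1/2 : ℝ) ^ i.natAbs)
  rw [← this]
  apply tsum_congr
  intro i
  simp [mirr, Int.natAbs_neg]

lemma rightperm_dpp (N : ℕ)
    (hφ : ∀ b c : Bool, localRule N c b false ≠ localRule N c b true) :
    ∀ x : ℤ → Bool, ∀ δ : ℝ, 0 < δ →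
      ∃ y : ℤ → Bool, (∃ p : ℕ, 0 < p ∧ (eca N)^[p] y = y) ∧ dC x y < δ := by
  intro x δ hδ
  set φ' : Bool → Bool → Bool → Bool := fun a b c => localRule N c b a with hφ'
  have hconj : ∀ v : ℤ → Bool, eca N (mirr v) = mirr (caF φ' v) := by
    intro v
    funext i
    simp only [eca, mirr, caF, hφ']
    rw [show -(i-1) = -i+1 by ring, show -(i+1) = -i-1 by ring]
  have hconj_iter : ∀ (k : ℕ) (v : ℤ → Bool),
      (eca N)^[k] (mirr v) = mirr ((caF φ')^[k] v) := by
    intro k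
    induction k with
    | zero => intro v; rfl
    | succ k ih =>
        intro v
        rw [Function.iterate_succ_apply', ih, hconj, Function.iterate_succ_apply']
  obtain ⟨y', ⟨p, hp, hper⟩, hd⟩ := perm_dpp φ' (fun b c => hφ b c) (mirr x) δ hδ
  refine ⟨mirr y', ⟨p, hp, ?_⟩, ?_⟩
  · rw [hconj_iter p y', hper]
  · calc dC x (mirr y') = dC (mirr (mirr x)) (mirr y') := by rw [mirr_mirr]
    _ = dC (mirr x) y' := dC_mirr _ _
    _ < δ := hd

lemma rule204_dpp :
    ∀ x : ℤ → Bool, ∀ δ : ℝ, 0 < δ →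
      ∃ y : ℤ → Bool, (∃ p : ℕ, 0 < p ∧ (eca 204)^[p] y = y) ∧ dC x y < δ := by
  intro x δ hδ
  have hr : ∀ a b c : Bool, localRule 204 a b c = b := by decide
  refine ⟨x, ⟨1, one_pos, ?_⟩, by simpa [dC_self] using hδ⟩
  funext i
  simp [Function.iterate_one, eca, hr]

lemma rule51_dpp :
    ∀ x : ℤ → Bool, ∀ δ : ℝ, 0 < δ →
      ∃ y : ℤ → Bool, (∃ p : ℕ, 0 < p ∧ (eca 51)^[p] y = y) ∧ dC x y < δ := by
  intro x δ hδ
  have hr : ∀ a b c : Bool, localRule 51 a b c = !b := by decide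
  refine ⟨x, ⟨2, by omega, ?_⟩, by simpa [dC_self] using hδ⟩
  have h2 : (eca 51)^[2] x = eca 51 (eca 51 x) := rfl
  rw [h2]
  funext i
  simp [eca, hr]

def stepP (N : ℕ) (o : Bool) (s : Bool → Bool → Bool) : Bool → Bool → Bool :=
  fun b c => (s true b && decide (localRule N true b c = o))
    || (s false b && decide (localRule N false b c = o))

def runP (N : ℕ) (w : List Bool) : Bool → Bool → Bool :=
  w.foldl (fun s o => stepP N o s) (fun _ _ => true)

lemma stepP_true (N : ℕ) (o : Bool) (s : Bool → Bool → Bool) (a b c : Bool)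
    (hs : s a b = true) (ho : localRule N a b c = o) : stepP N o s b c = true := by
  cases a
  · simp [stepP, hs, ho]
  · simp [stepP, hs, ho]

lemma runP_aux (N : ℕ) : ∀ (w : List Bool) (s : Bool → Bool → Bool) (x : ℤ → Bool) (t : ℤ),
    s (x (t-1)) (x t) = true →
    (∀ k : ℕ, k < w.length → eca N x (t + (k:ℤ)) = w.getD k false) →
    (w.foldl (fun s o => stepP N o s) s) (x (t + (w.length:ℤ) - 1)) (x (t + (w.length:ℤ))) = true
  | [], s, x, t, hs, _ => by simpa using hs
  | (o :: w'), s, x, t, hs, hm => by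
      have h0 : eca N x t = o := by
        have := hm 0 (by simp)
        simpa using this
      have hstep : stepP N o s (x t) (x (t+1)) = true := by
        refine stepP_true N o s (x (t-1)) (x t) (x (t+1)) hs ?_
        exact h0
      have hm' : ∀ k : ℕ, k < w'.length → eca N x ((t+1) + (k:ℤ)) = w'.getD k false := by
        intro k hk
        have := hm (k+1) (by simpa using Nat.succ_lt_succ hk)
        rw [show t + ((k+1 : ℕ):ℤ) = (t+1) + (k:ℤ) by push_cast; ring] at this
        simpa using this
      have := runP_aux N w' (stepP N o s) x (t+1) (by simpa using hstep) hm'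
      rw [show (t+1) + ((w'.length:ℕ):ℤ) - 1 = t + (((o::w').length:ℕ):ℤ) - 1 by
            simp; push_cast; ring,
          show (t+1) + ((w'.length:ℕ):ℤ) = t + (((o::w').length:ℕ):ℤ) by
            simp; push_cast; ring] at this
      simpa using this

lemma refute_orphan' (N : ℕ) (w : List Bool)
    (hempty : ∀ b c : Bool, runP N w b c = false) :
    ¬ Function.Surjective (eca N) := by
  intro hs
  obtain ⟨x, hx⟩ := hs (fun i => if 0 ≤ i ∧ i < (w.length:ℤ) then w.getD i.toNat false else false)
  have hm : ∀ k : ℕ, k < w.length → eca N x ((0:ℤ) + (k:ℤ)) = w.getD k false := by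
    intro k hk
    have hc := congrFun hx ((k:ℕ):ℤ)
    rw [if_pos (show 0 ≤ ((k:ℕ):ℤ) ∧ ((k:ℕ):ℤ) < (w.length:ℤ) by constructor <;> omega)] at hc
    rw [show ((0:ℤ) + (k:ℤ)) = ((k:ℕ):ℤ) by ring, hc]
    simp
  have h2 := runP_aux N w (fun _ _ => true) x 0 rfl hm
  have h3 := hempty (x ((0:ℤ) + (w.length:ℤ) - 1)) (x ((0:ℤ) + (w.length:ℤ)))
  rw [runP] at h3
  rw [h3] at h2
  exact Bool.false_ne_true h2

/-- If an elementary cellular automaton is surjective, then its set of periodic points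
is dense in `X` (with respect to the Cantor metric). -/
theorem eca_surjective_dense_periodic_points (N : ℕ) (hN : N ≤ 255)
    (h : Function.Surjective (eca N)) :
    ∀ x : ℤ → Bool, ∀ δ : ℝ, 0 < δ →
      ∃ y : ℤ → Bool, (∃ p : ℕ, 0 < p ∧ (eca N)^[p] y = y) ∧ dC x y < δ := by
  interval_cases N
  · exact absurd h (refute_orphan' 0 [true] (by decide))
  · exact absurd h (refute_orphan' 1 [true,false,true] (by decide))
  · exact absurd h (refute_orphan' 2 [true,true] (by decide))
  · exact absurd h (refute_orphan' 3 [true,false,true] (by decide))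
  · exact absurd h (refute_orphan' 4 [true,true] (by decide))
  · exact absurd h (refute_orphan' 5 [true,false,false,false,true] (by decide))
  · exact absurd h (refute_orphan' 6 [true,true,true] (by decide))
  · exact absurd h (refute_orphan' 7 [true,false,false,true] (by decide))
  · exact absurd h (refute_orphan' 8 [true,true] (by decide))
  · exact absurd h (refute_orphan' 9 [true,false,true,true] (by decide))
  · exact absurd h (refute_orphan' 10 [true,false,true] (by decide))
  · exact absurd h (refute_orphan' 11 [true,false,true] (by decide))
  · exact absurd h (refute_orphan' 12 [true,true] (by decide))
  · exact absurd h (refute_orphan' 13 [true,true,false,false] (by decide))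
  · exact absurd h (refute_orphan' 14 [true,true,true] (by decide))
  · exact leftperm_dpp 15 (by decide)
  · exact absurd h (refute_orphan' 16 [true,true] (by decide))
  · exact absurd h (refute_orphan' 17 [true,false,true] (by decide))
  · exact absurd h (refute_orphan' 18 [true,true,true] (by decide))
  · exact absurd h (refute_orphan' 19 [false,true,false] (by decide))
  · exact absurd h (refute_orphan' 20 [true,true,true] (by decide))
  · exact absurd h (refute_orphan' 21 [true,false,false,true] (by decide))
  · exact absurd h (refute_orphan' 22 [true,false,false,true,false,true,false,true] (by decide))
  · exact absurd h (refute_orphan' 23 [false,true,false,false,true] (by decide))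
  · exact absurd h (refute_orphan' 24 [true,true] (by decide))
  · exact absurd h (refute_orphan' 25 [true,true,false,true,true] (by decide))
  · exact absurd h (refute_orphan' 26 [true,true,true,true] (by decide))
  · exact absurd h (refute_orphan' 27 [true,false,true,false] (by decide))
  · exact absurd h (refute_orphan' 28 [true,true,true] (by decide))
  · exact absurd h (refute_orphan' 29 [true,true,false,false] (by decide))
  · exact leftperm_dpp 30 (by decide)
  · exact absurd h (refute_orphan' 31 [false,true,true,false] (by decide))
  · exact absurd h (refute_orphan' 32 [true,true] (by decide))
  · exact absurd h (refute_orphan' 33 [true,false,true,true] (by decide))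
  · exact absurd h (refute_orphan' 34 [true,true] (by decide))
  · exact absurd h (refute_orphan' 35 [true,false,true,true] (by decide))
  · exact absurd h (refute_orphan' 36 [true,false,true] (by decide))
  · exact absurd h (refute_orphan' 37 [true,false,false,true,false,true,false,false,true] (by decide))
  · exact absurd h (refute_orphan' 38 [false,true,false,true] (by decide))
  · exact absurd h (refute_orphan' 39 [false,true,false,true] (by decide))
  · exact absurd h (refute_orphan' 40 [true,true,true] (by decide))
  · exact absurd h (refute_orphan' 41 [true,false,true,true,true] (by decide))
  · exact absurd h (refute_orphan' 42 [true,true,true] (by decide))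
  · exact absurd h (refute_orphan' 43 [false,true,false,false,false] (by decide))
  · exact absurd h (refute_orphan' 44 [true,false,true,false] (by decide))
  · exact leftperm_dpp 45 (by decide)
  · exact absurd h (refute_orphan' 46 [false,true,false] (by decide))
  · exact absurd h (refute_orphan' 47 [false,true,false] (by decide))
  · exact absurd h (refute_orphan' 48 [true,true] (by decide))
  · exact absurd h (refute_orphan' 49 [true,true,false,true] (by decide))
  · exact absurd h (refute_orphan' 50 [true,true,true] (by decide))
  · exact rule51_dpp
  · exact absurd h (refute_orphan' 52 [true,false,true,false] (by decide))
  · exact absurd h (refute_orphan' 53 [true,false,true,false] (by decide))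
  · exact absurd h (refute_orphan' 54 [false,true,true,false,true] (by decide))
  · exact absurd h (refute_orphan' 55 [true,false,true] (by decide))
  · exact absurd h (refute_orphan' 56 [true,true,true] (by decide))
  · exact absurd h (refute_orphan' 57 [false,false,true,false,false,false] (by decide))
  · exact absurd h (refute_orphan' 58 [true,true,true,true] (by decide))
  · exact absurd h (refute_orphan' 59 [false,true,false,false] (by decide))
  · exact leftperm_dpp 60 (by decide)
  · exact absurd h (refute_orphan' 61 [false,false,true,false,false] (by decide))
  · exact absurd h (refute_orphan' 62 [false,true,false,true,false] (by decide))
  · exact absurd h (refute_orphan' 63 [false,true,false] (by decide))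
  · exact absurd h (refute_orphan' 64 [true,true] (by decide))
  · exact absurd h (refute_orphan' 65 [true,true,false,true] (by decide))
  · exact absurd h (refute_orphan' 66 [true,true] (by decide))
  · exact absurd h (refute_orphan' 67 [true,true,false,true,true] (by decide))
  · exact absurd h (refute_orphan' 68 [true,true] (by decide))
  · exact absurd h (refute_orphan' 69 [false,false,true,true] (by decide))
  · exact absurd h (refute_orphan' 70 [true,true,true] (by decide))
  · exact absurd h (refute_orphan' 71 [false,false,true,true] (by decide))
  · exact absurd h (refute_orphan' 72 [true,true,true] (by decide))
  · exact absurd h (refute_orphan' 73 [true,false,false,true,true,true] (by decide))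
  · exact absurd h (refute_orphan' 74 [true,true,true,true] (by decide))
  · exact leftperm_dpp 75 (by decide)
  · exact absurd h (refute_orphan' 76 [true,true,true] (by decide))
  · exact absurd h (refute_orphan' 77 [false,false,false,true,true] (by decide))
  · exact absurd h (refute_orphan' 78 [true,true,true,true] (by decide))
  · exact absurd h (refute_orphan' 79 [false,false,true,true] (by decide))
  · exact absurd h (refute_orphan' 80 [true,false,true] (by decide))
  · exact absurd h (refute_orphan' 81 [true,false,true] (by decide))
  · exact absurd h (refute_orphan' 82 [true,true,true,true] (by decide))
  · exact absurd h (refute_orphan' 83 [false,true,false,true] (by decide))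
  · exact absurd h (refute_orphan' 84 [true,true,true] (by decide))
  · exact rightperm_dpp 85 (by decide)
  · exact rightperm_dpp 86 (by decide)
  · exact absurd h (refute_orphan' 87 [false,true,true,false] (by decide))
  · exact absurd h (refute_orphan' 88 [true,true,true,true] (by decide))
  · exact rightperm_dpp 89 (by decide)
  · exact leftperm_dpp 90 (by decide)
  · exact absurd h (refute_orphan' 91 [false,true,false,false,true,false,false,true,false] (by decide))
  · exact absurd h (refute_orphan' 92 [true,true,true,true] (by decide))
  · exact absurd h (refute_orphan' 93 [true,true,false,false] (by decide))
  · exact absurd h (refute_orphan' 94 [false,false,true,false,false] (by decide))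
  · exact absurd h (refute_orphan' 95 [false,false,true,false,false] (by decide))
  · exact absurd h (refute_orphan' 96 [true,true,true] (by decide))
  · exact absurd h (refute_orphan' 97 [true,true,true,false,true] (by decide))
  · exact absurd h (refute_orphan' 98 [true,true,true] (by decide))
  · exact absurd h (refute_orphan' 99 [false,false,false,true,false,false] (by decide))
  · exact absurd h (refute_orphan' 100 [false,true,false,true] (by decide))
  · exact rightperm_dpp 101 (by decide)
  · exact rightperm_dpp 102 (by decide)
  · exact absurd h (refute_orphan' 103 [false,false,true,false,false] (by decide))
  · exact absurd h (refute_orphan' 104 [true,false,false,true,false,true,false,true] (by decide))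
  · exact leftperm_dpp 105 (by decide)
  · exact rightperm_dpp 106 (by decide)
  · exact absurd h (refute_orphan' 107 [false,true,false,false,false] (by decide))
  · exact absurd h (refute_orphan' 108 [false,true,true,false,true] (by decide))
  · exact absurd h (refute_orphan' 109 [false,false,false,true,true,false] (by decide))
  · exact absurd h (refute_orphan' 110 [false,true,false,true,false] (by decide))
  · exact absurd h (refute_orphan' 111 [false,true,false,false] (by decide))
  · exact absurd h (refute_orphan' 112 [true,true,true] (by decide))
  · exact absurd h (refute_orphan' 113 [false,false,false,true,false] (by decide))
  · exact absurd h (refute_orphan' 114 [true,true,true,true] (by decide))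
  · exact absurd h (refute_orphan' 115 [false,false,true,false] (by decide))
  · exact absurd h (refute_orphan' 116 [false,true,false] (by decide))
  · exact absurd h (refute_orphan' 117 [false,true,false] (by decide))
  · exact absurd h (refute_orphan' 118 [false,true,false,true,false] (by decide))
  · exact absurd h (refute_orphan' 119 [false,true,false] (by decide))
  · exact leftperm_dpp 120 (by decide)
  · exact absurd h (refute_orphan' 121 [false,false,false,true,false] (by decide))
  · exact absurd h (refute_orphan' 122 [false,false,true,false,false] (by decide))
  · exact absurd h (refute_orphan' 123 [false,false,true,false] (by decide))
  · exact absurd h (refute_orphan' 124 [false,true,false,true,false] (by decide))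
  · exact absurd h (refute_orphan' 125 [false,false,true,false] (by decide))
  · exact absurd h (refute_orphan' 126 [false,true,false] (by decide))
  · exact absurd h (refute_orphan' 127 [false,true,false] (by decide))
  · exact absurd h (refute_orphan' 128 [true,false,true] (by decide))
  · exact absurd h (refute_orphan' 129 [true,false,true] (by decide))
  · exact absurd h (refute_orphan' 130 [true,true,false,true] (by decide))
  · exact absurd h (refute_orphan' 131 [true,false,true,false,true] (by decide))
  · exact absurd h (refute_orphan' 132 [true,false,true,true] (by decide))
  · exact absurd h (refute_orphan' 133 [true,true,false,true,true] (by decide))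
  · exact absurd h (refute_orphan' 134 [true,true,true,false,true] (by decide))
  · exact leftperm_dpp 135 (by decide)
  · exact absurd h (refute_orphan' 136 [true,false,true] (by decide))
  · exact absurd h (refute_orphan' 137 [true,false,true,false,true] (by decide))
  · exact absurd h (refute_orphan' 138 [true,false,true] (by decide))
  · exact absurd h (refute_orphan' 139 [true,false,true] (by decide))
  · exact absurd h (refute_orphan' 140 [true,true,false,true] (by decide))
  · exact absurd h (refute_orphan' 141 [false,false,false,false] (by decide))
  · exact absurd h (refute_orphan' 142 [false,false,false,true,false] (by decide))
  · exact absurd h (refute_orphan' 143 [false,false,false] (by decide))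
  · exact absurd h (refute_orphan' 144 [true,false,true,true] (by decide))
  · exact absurd h (refute_orphan' 145 [true,false,true,false,true] (by decide))
  · exact absurd h (refute_orphan' 146 [true,false,false,true,true,true] (by decide))
  · exact absurd h (refute_orphan' 147 [false,true,false,false,true] (by decide))
  · exact absurd h (refute_orphan' 148 [true,false,true,true,true] (by decide))
  · exact rightperm_dpp 149 (by decide)
  · exact leftperm_dpp 150 (by decide)
  · exact absurd h (refute_orphan' 151 [false,true,false,true,false,true,true,false] (by decide))
  · exact absurd h (refute_orphan' 152 [true,true,false,true,true] (by decide))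
  · exact rightperm_dpp 153 (by decide)
  · exact rightperm_dpp 154 (by decide)
  · exact absurd h (refute_orphan' 155 [true,false,true,false] (by decide))
  · exact absurd h (refute_orphan' 156 [false,false,true,false,false,false] (by decide))
  · exact absurd h (refute_orphan' 157 [false,false,false] (by decide))
  · exact absurd h (refute_orphan' 158 [false,false,false,true,false] (by decide))
  · exact absurd h (refute_orphan' 159 [false,false,false] (by decide))
  · exact absurd h (refute_orphan' 160 [true,false,false,false,true] (by decide))
  · exact absurd h (refute_orphan' 161 [true,true,false,true,true] (by decide))
  · exact absurd h (refute_orphan' 162 [false,false,true,true] (by decide))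
  · exact absurd h (refute_orphan' 163 [false,false,false,false] (by decide))
  · exact absurd h (refute_orphan' 164 [true,false,false,true,false,true,false,false,true] (by decide))
  · exact leftperm_dpp 165 (by decide)
  · exact rightperm_dpp 166 (by decide)
  · exact absurd h (refute_orphan' 167 [false,false,false,false] (by decide))
  · exact absurd h (refute_orphan' 168 [true,false,false,true] (by decide))
  · exact rightperm_dpp 169 (by decide)
  · exact rightperm_dpp 170 (by decide)
  · exact absurd h (refute_orphan' 171 [false,false,false] (by decide))
  · exact absurd h (refute_orphan' 172 [true,false,true,false] (by decide))
  · exact absurd h (refute_orphan' 173 [false,false,false,false] (by decide))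
  · exact absurd h (refute_orphan' 174 [false,true,false] (by decide))
  · exact absurd h (refute_orphan' 175 [false,false,false] (by decide))
  · exact absurd h (refute_orphan' 176 [true,true,false,false] (by decide))
  · exact absurd h (refute_orphan' 177 [false,false,false,false] (by decide))
  · exact absurd h (refute_orphan' 178 [false,false,false,true,true] (by decide))
  · exact absurd h (refute_orphan' 179 [false,false,false] (by decide))
  · exact leftperm_dpp 180 (by decide)
  · exact absurd h (refute_orphan' 181 [false,false,false,false] (by decide))
  · exact absurd h (refute_orphan' 182 [false,false,false,true,true,false] (by decide))
  · exact absurd h (refute_orphan' 183 [false,false,false] (by decide))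
  · exact absurd h (refute_orphan' 184 [true,true,false,false] (by decide))
  · exact absurd h (refute_orphan' 185 [false,false,false] (by decide))
  · exact absurd h (refute_orphan' 186 [true,true,false,false] (by decide))
  · exact absurd h (refute_orphan' 187 [false,false] (by decide))
  · exact absurd h (refute_orphan' 188 [false,false,true,false,false] (by decide))
  · exact absurd h (refute_orphan' 189 [false,false] (by decide))
  · exact absurd h (refute_orphan' 190 [false,false,true,false] (by decide))
  · exact absurd h (refute_orphan' 191 [false,false] (by decide))
  · exact absurd h (refute_orphan' 192 [true,false,true] (by decide))
  · exact absurd h (refute_orphan' 193 [true,false,true,false,true] (by decide))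
  · exact absurd h (refute_orphan' 194 [true,true,false,true,true] (by decide))
  · exact leftperm_dpp 195 (by decide)
  · exact absurd h (refute_orphan' 196 [true,false,true,true] (by decide))
  · exact absurd h (refute_orphan' 197 [false,false,false,false] (by decide))
  · exact absurd h (refute_orphan' 198 [false,false,false,true,false,false] (by decide))
  · exact absurd h (refute_orphan' 199 [false,false,false] (by decide))
  · exact absurd h (refute_orphan' 200 [false,true,false] (by decide))
  · exact absurd h (refute_orphan' 201 [false,true,false,false,true] (by decide))
  · exact absurd h (refute_orphan' 202 [false,true,false,true] (by decide))
  · exact absurd h (refute_orphan' 203 [false,true,false,true] (by decide))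
  · exact rule204_dpp
  · exact absurd h (refute_orphan' 205 [false,false,false] (by decide))
  · exact absurd h (refute_orphan' 206 [false,false,true,false] (by decide))
  · exact absurd h (refute_orphan' 207 [false,false] (by decide))
  · exact absurd h (refute_orphan' 208 [true,false,true] (by decide))
  · exact absurd h (refute_orphan' 209 [true,false,true] (by decide))
  · exact leftperm_dpp 210 (by decide)
  · exact absurd h (refute_orphan' 211 [false,true,false,true] (by decide))
  · exact absurd h (refute_orphan' 212 [false,true,false,false,false] (by decide))
  · exact absurd h (refute_orphan' 213 [false,false,false] (by decide))
  · exact absurd h (refute_orphan' 214 [false,true,false,false,false] (by decide))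
  · exact absurd h (refute_orphan' 215 [false,false,false] (by decide))
  · exact absurd h (refute_orphan' 216 [true,false,true,false] (by decide))
  · exact absurd h (refute_orphan' 217 [true,false,true,false] (by decide))
  · exact absurd h (refute_orphan' 218 [false,true,false,false,true,false,false,true,false] (by decide))
  · exact absurd h (refute_orphan' 219 [false,true,false] (by decide))
  · exact absurd h (refute_orphan' 220 [false,true,false,false] (by decide))
  · exact absurd h (refute_orphan' 221 [false,false] (by decide))
  · exact absurd h (refute_orphan' 222 [false,false,true,false] (by decide))
  · exact absurd h (refute_orphan' 223 [false,false] (by decide))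
  · exact absurd h (refute_orphan' 224 [true,false,false,true] (by decide))
  · exact leftperm_dpp 225 (by decide)
  · exact absurd h (refute_orphan' 226 [false,false,true,true] (by decide))
  · exact absurd h (refute_orphan' 227 [false,false,false] (by decide))
  · exact absurd h (refute_orphan' 228 [false,true,false,true] (by decide))
  · exact absurd h (refute_orphan' 229 [false,false,false,false] (by decide))
  · exact absurd h (refute_orphan' 230 [false,false,true,false,false] (by decide))
  · exact absurd h (refute_orphan' 231 [false,false] (by decide))
  · exact absurd h (refute_orphan' 232 [false,true,false,false,true] (by decide))
  · exact absurd h (refute_orphan' 233 [false,true,false,true,false,true,true,false] (by decide))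
  · exact absurd h (refute_orphan' 234 [false,true,true,false] (by decide))
  · exact absurd h (refute_orphan' 235 [false,false,false] (by decide))
  · exact absurd h (refute_orphan' 236 [true,false,true] (by decide))
  · exact absurd h (refute_orphan' 237 [false,false,false] (by decide))
  · exact absurd h (refute_orphan' 238 [false,true,false] (by decide))
  · exact absurd h (refute_orphan' 239 [false,false] (by decide))
  · exact leftperm_dpp 240 (by decide)
  · exact absurd h (refute_orphan' 241 [false,false,false] (by decide))
  · exact absurd h (refute_orphan' 242 [false,false,true,true] (by decide))
  · exact absurd h (refute_orphan' 243 [false,false] (by decide))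
  · exact absurd h (refute_orphan' 244 [false,true,false] (by decide))
  · exact absurd h (refute_orphan' 245 [false,false,false] (by decide))
  · exact absurd h (refute_orphan' 246 [false,true,false,false] (by decide))
  · exact absurd h (refute_orphan' 247 [false,false] (by decide))
  · exact absurd h (refute_orphan' 248 [false,true,true,false] (by decide))
  · exact absurd h (refute_orphan' 249 [false,false,false] (by decide))
  · exact absurd h (refute_orphan' 250 [false,false,true,false,false] (by decide))
  · exact absurd h (refute_orphan' 251 [false,false] (by decide))
  · exact absurd h (refute_orphan' 252 [false,true,false] (by decide))
  · exact absurd h (refute_orphan' 253 [false,false] (by decide))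
  · exact absurd h (refute_orphan' 254 [false,true,false] (by decide))
  · exact absurd h (refute_orphan' 255 [false] (by decide))
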